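/- For every feasible distribution p for the symmetric TSC scheme, one has Σ_{m=1}^{N^K} p_m log p_m ≥ Σ_{m=1}^{N^K} p*_m log p*_m (with the convention 0·log 0 = 0); consequently p* minimizes the Kullback–Leibler divergence Σ_m p_m log(N^K p_m) from the uniform distribution among all feasible distributions. -/

import Mathlib

open Finset Real

/-- Download cost of option `m` (0-indexed: options `1,…,N` of the paper are `m < N`)
in the symmetric TSC scheme with `N` databases and `K` messages. -/
noncomputable def tscCost (N m : ℕ) : ℝ := if m < N then (N : ℝ) - 1 else (N : ℝ)

/-- `p` is a feasible query distribution for the symmetric TSC scheme with expected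
normalized download cost `D`. -/
def TSCFeasible (N K : ℕ) (D : ℝ) (p : ℕ → ℝ) : Prop :=
  (∀ m ∈ Finset.range (N ^ K), 0 ≤ p m) ∧
  (∑ m ∈ Finset.range (N ^ K), p m = 1) ∧
  (1 / ((N : ℝ) - 1)) * (∑ m ∈ Finset.range (N ^ K), p m * tscCost N m) = D

/-- The optimal distribution `p*` for the symmetric TSC scheme. -/
noncomputable def tscOpt (N K : ℕ) (D : ℝ) (m : ℕ) : ℝ :=
  if m < N then (1 - ((N : ℝ) - 1) * (D - 1)) / N
  else ((N : ℝ) - 1) * (D - 1) / ((N : ℝ) ^ K - (N : ℝ))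

/-- Download cost of option `m` (0-indexed) in the alternative PIR scheme with
message length `L`. -/
noncomputable def altCost (N L m : ℕ) : ℝ := if m < N then (L : ℝ) else (L : ℝ) + 1

/-- `p` is a feasible query distribution for the alternative PIR scheme
(`M = N (L+1)^(K-1)` options) with expected normalized download cost `D`. -/
def AltFeasible (N K L : ℕ) (D : ℝ) (p : ℕ → ℝ) : Prop :=
  (∀ m ∈ Finset.range (N * (L + 1) ^ (K - 1)), 0 ≤ p m) ∧
  (∑ m ∈ Finset.range (N * (L + 1) ^ (K - 1)), p m = 1) ∧
  (1 / (L : ℝ)) * (∑ m ∈ Finset.range (N * (L + 1) ^ (K - 1)), p m * altCost N L m) = D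

/-- The optimal distribution `q*` for the alternative PIR scheme. -/
noncomputable def altOpt (N K L : ℕ) (D : ℝ) (m : ℕ) : ℝ :=
  if m < N then (1 - (L : ℝ) * (D - 1)) / N
  else (L : ℝ) * (D - 1) / ((N : ℝ) * ((L : ℝ) + 1) ^ (K - 1) - (N : ℝ))

/-- Rényi divergence of order `α` (`0 < α`, `α ≠ 1`) of a distribution `p` on `M`
options from the uniform distribution on those options (natural logarithm). -/
noncomputable def renyiDiv (M : ℕ) (α : ℝ) (p : ℕ → ℝ) : ℝ :=
  (1 / (α - 1)) * Real.log ((M : ℝ) ^ (α - 1) * ∑ m ∈ Finset.range M, p m ^ α)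

/-- Kullback–Leibler divergence of a distribution `p` on `M` options from the uniform
distribution on those options (natural logarithm, with `0 · log 0 = 0`). -/
noncomputable def klDivUnif (M : ℕ) (p : ℕ → ℝ) : ℝ :=
  ∑ m ∈ Finset.range M, p m * Real.log ((M : ℝ) * p m)

/-- The maximum of `p` over the `M` options. -/
noncomputable def maxOver (M : ℕ) (hM : M ≠ 0) (p : ℕ → ℝ) : ℝ :=
  (Finset.range M).sup' (Finset.nonempty_range_iff.mpr hM) p

lemma tsc_ptwise (x c : ℝ) (hx : 0 ≤ x) (hc : 0 < c) :
    x * Real.log c + (x - c) ≤ x * Real.log x := by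
  rcases hx.eq_or_lt with h | h
  · rw [← h]; simp; linarith
  · have h1 := Real.log_le_sub_one_of_pos (div_pos hc h)
    rw [Real.log_div hc.ne' h.ne'] at h1
    have h2 : x * (Real.log c - Real.log x) ≤ x * (c / x - 1) :=
      mul_le_mul_of_nonneg_left h1 h.le
    have h3 : x * (c / x - 1) = c - x := by field_simp
    nlinarith [h2, h3]

lemma tsc_group (s : Finset ℕ) (p : ℕ → ℝ) (c : ℝ) (hc : 0 ≤ c)
    (hp : ∀ m ∈ s, 0 ≤ p m) (hsum : ∑ m ∈ s, p m = (s.card : ℝ) * c) :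
    (s.card : ℝ) * (c * Real.log c) ≤ ∑ m ∈ s, p m * Real.log (p m) := by
  rcases hc.eq_or_lt with h | h
  · have hz : ∀ m ∈ s, p m = 0 :=
      (Finset.sum_eq_zero_iff_of_nonneg hp).mp (by rw [hsum, ← h]; ring)
    rw [Finset.sum_congr rfl fun m hm => by rw [hz m hm]]
    simp [← h]
  · have key : ∀ m ∈ s, p m * Real.log c + (p m - c) ≤ p m * Real.log (p m) :=
      fun m hm => tsc_ptwise _ _ (hp m hm) h
    have h1 := Finset.sum_le_sum key
    have h2 : ∑ m ∈ s, (p m * Real.log c + (p m - c)) = (s.card : ℝ) * (c * Real.log c) := by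
      rw [Finset.sum_add_distrib, ← Finset.sum_mul, Finset.sum_sub_distrib, hsum,
        Finset.sum_const, nsmul_eq_mul]
      ring
    linarith

theorem tsc_kl_min (N K : ℕ) (hN : 2 ≤ N) (hK : 2 ≤ K) (D : ℝ)
    (hD1 : 1 ≤ D) (hD2 : D ≤ ∑ k ∈ Finset.range K, ((N : ℝ) ^ k)⁻¹)
    (p : ℕ → ℝ) (hp : TSCFeasible N K D p) :
    (∑ m ∈ Finset.range (N ^ K), tscOpt N K D m * Real.log (tscOpt N K D m)) ≤
      (∑ m ∈ Finset.range (N ^ K), p m * Real.log (p m)) ∧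
    klDivUnif (N ^ K) (tscOpt N K D) ≤ klDivUnif (N ^ K) p := by
  obtain ⟨hpos, hsum1, hcost⟩ := hp
  set M := N ^ K with hM
  set n : ℝ := (N : ℝ) with hn
  have hN1 : (1 : ℝ) < n := by rw [hn]; exact_mod_cast (by omega : 1 < N)
  have hn0 : (0 : ℝ) < n := by linarith
  have hNM : N < M := by
    calc N = N ^ 1 := (pow_one N).symm
    _ < N ^ K := Nat.pow_lt_pow_right (by omega) (by omega)
  have hMcast : ((M : ℕ) : ℝ) = n ^ K := by rw [hM, hn]; push_cast; ring
  have hnK : n < n ^ K := by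
    calc n = n ^ 1 := (pow_one n).symm
    _ < n ^ K := by exact pow_lt_pow_right₀ hN1 (by omega)
  -- geometric identity
  have hid : ∀ J : ℕ, (n - 1) * ∑ k ∈ Finset.range J, (n ^ k)⁻¹ = n - n * (n ^ J)⁻¹ := by
    intro J
    induction J with
    | zero => simp
    | succ J ih =>
      rw [Finset.sum_range_succ, mul_add, ih]
      have hpK : (0 : ℝ) < n ^ J := pow_pos hn0 J
      field_simp
      ring
  have hDle : (n - 1) * D ≤ n := by
    have h1 : (n - 1) * D ≤ (n - 1) * ∑ k ∈ Finset.range K, (n ^ k)⁻¹ :=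
      mul_le_mul_of_nonneg_left hD2 (by linarith)
    have h2 := hid K
    have h3 : 0 < n * (n ^ K)⁻¹ := by positivity
    linarith
  -- split sums
  have hsplit : ∀ f : ℕ → ℝ, ∑ m ∈ Finset.range M, f m
      = ∑ m ∈ Finset.range N, f m + ∑ m ∈ Finset.Ico N M, f m := by
    intro f
    rw [Finset.range_eq_Ico, ← Finset.sum_Ico_consecutive f (Nat.zero_le N) hNM.le]
    rw [Finset.range_eq_Ico]
  set S1 := ∑ m ∈ Finset.range N, p m with hS1
  set S2 := ∑ m ∈ Finset.Ico N M, p m with hS2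
  have hsum12 : S1 + S2 = 1 := by rw [hS1, hS2, ← hsplit p]; exact hsum1
  have e1 : ∑ m ∈ Finset.range N, p m * tscCost N m = (n - 1) * S1 := by
    rw [hS1, Finset.mul_sum]
    refine Finset.sum_congr rfl fun m hm => ?_
    rw [tscCost, if_pos (Finset.mem_range.mp hm), hn]; ring
  have e2 : ∑ m ∈ Finset.Ico N M, p m * tscCost N m = n * S2 := by
    rw [hS2, Finset.mul_sum]
    refine Finset.sum_congr rfl fun m hm => ?_
    rw [tscCost, if_neg (by simpa using Nat.not_lt.mpr (Finset.mem_Ico.mp hm).1), hn]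
    ring
  have hcostsum : ∑ m ∈ Finset.range M, p m * tscCost N m = (n - 1) * S1 + n * S2 := by
    rw [hsplit fun m => p m * tscCost N m, e1, e2]
  rw [hcostsum] at hcost
  have hcost' : (n - 1) * S1 + n * S2 = D * (n - 1) := by
    have hne : n - 1 ≠ 0 := by linarith
    field_simp at hcost
    linarith
  have h2' : (n - 1) * (S1 + S2) = n - 1 := by rw [hsum12]; ring
  have hS2val : S2 = (n - 1) * (D - 1) := by linear_combination hcost' - h2'
  have hS1val : S1 = 1 - (n - 1) * (D - 1) := by linear_combination hsum12 - hS2val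
  -- the optimal values
  set a : ℝ := (1 - (n - 1) * (D - 1)) / n with ha
  set b : ℝ := (n - 1) * (D - 1) / (n ^ K - n) with hb
  have hdenom : (0 : ℝ) < n ^ K - n := by linarith
  have ha0 : 0 ≤ a := by
    apply div_nonneg _ hn0.le
    linarith [hDle]
  have hb0 : 0 ≤ b := by
    apply div_nonneg _ hdenom.le
    nlinarith [hD1, hN1]
  have hopt1 : ∀ m ∈ Finset.range N, tscOpt N K D m = a := fun m hm => by
    rw [tscOpt, if_pos (Finset.mem_range.mp hm)]
  have hopt2 : ∀ m ∈ Finset.Ico N M, tscOpt N K D m = b := fun m hm => by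
    rw [tscOpt, if_neg (by simpa using Nat.not_lt.mpr (Finset.mem_Ico.mp hm).1)]
  have hcard1 : ((Finset.range N).card : ℝ) = n := by simp [hn]
  have hcard2 : ((Finset.Ico N M).card : ℝ) = n ^ K - n := by
    rw [Nat.card_Ico, Nat.cast_sub hNM.le, hMcast, hn]
  -- sums of the optimal distribution
  have hna : n * a = 1 - (n - 1) * (D - 1) := by
    rw [ha]; field_simp
  have hMb : (n ^ K - n) * b = (n - 1) * (D - 1) := by
    rw [hb]; field_simp
  -- group inequalities
  have hg1 : ((Finset.range N).card : ℝ) * (a * Real.log a)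
      ≤ ∑ m ∈ Finset.range N, p m * Real.log (p m) := by
    apply tsc_group _ _ _ ha0
    · exact fun m hm => hpos m (Finset.mem_range.mpr (lt_of_lt_of_le (Finset.mem_range.mp hm) hNM.le))
    · rw [hcard1, hna, ← hS1val]
  have hg2 : ((Finset.Ico N M).card : ℝ) * (b * Real.log b)
      ≤ ∑ m ∈ Finset.Ico N M, p m * Real.log (p m) := by
    apply tsc_group _ _ _ hb0
    · intro m hm
      exact hpos m (Finset.mem_range.mpr (Finset.mem_Ico.mp hm).2)
    · rw [hcard2, hMb, ← hS2val]
  have hoptsum : ∀ f : ℝ → ℝ, ∑ m ∈ Finset.range M, f (tscOpt N K D m)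
      = ((Finset.range N).card : ℝ) * f a + ((Finset.Ico N M).card : ℝ) * f b := by
    intro f
    have c1 : ∑ m ∈ Finset.range N, f (tscOpt N K D m) = ∑ _m ∈ Finset.range N, f a :=
      Finset.sum_congr rfl fun m hm => by rw [hopt1 m hm]
    have c2 : ∑ m ∈ Finset.Ico N M, f (tscOpt N K D m) = ∑ _m ∈ Finset.Ico N M, f b :=
      Finset.sum_congr rfl fun m hm => by rw [hopt2 m hm]
    rw [hsplit fun m => f (tscOpt N K D m), c1, c2, Finset.sum_const, Finset.sum_const,
      nsmul_eq_mul, nsmul_eq_mul]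
  -- first statement
  have main : ∑ m ∈ Finset.range M, tscOpt N K D m * Real.log (tscOpt N K D m)
      ≤ ∑ m ∈ Finset.range M, p m * Real.log (p m) := by
    rw [hoptsum (fun x => x * Real.log x), hsplit fun m => p m * Real.log (p m)]
    exact add_le_add hg1 hg2
  refine ⟨main, ?_⟩
  -- KL consequence
  have hoptsum1 : ∑ m ∈ Finset.range M, tscOpt N K D m = 1 := by
    have h := hoptsum (fun x => x)
    rw [h, hcard1, hcard2]
    linarith [hna, hMb]
  have hkl : ∀ q : ℕ → ℝ, (∑ m ∈ Finset.range M, q m = 1) →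
      klDivUnif M q = Real.log (M : ℝ) + ∑ m ∈ Finset.range M, q m * Real.log (q m) := by
    intro q hq
    unfold klDivUnif
    have hMne : ((M : ℕ) : ℝ) ≠ 0 := by rw [hMcast]; positivity
    have step : ∀ m ∈ Finset.range M, q m * Real.log ((M : ℝ) * q m)
        = q m * Real.log (M : ℝ) + q m * Real.log (q m) := by
      intro m _
      by_cases h : q m = 0
      · simp [h]
      · rw [Real.log_mul hMne h]; ring
    rw [Finset.sum_congr rfl step, Finset.sum_add_distrib, ← Finset.sum_mul, hq, one_mul]
  rw [hkl p hsum1, hkl (tscOpt N K D) hoptsum1]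
  linarith [main]
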